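/- Let (M,d) be a pseudometric space, N a finite nonempty set of agents (points of M) partitioned into a finite nonempty collection G of nonempty groups, and A a finite nonempty set of alternatives (points of M). Suppose r : G → A assigns to each group g an alternative maximizing the group welfare, i.e., for every g ∈ G and every x ∈ A, Σ_{i∈g} d(i,x) ≤ Σ_{i∈g} d(i, r(g)). Let R = r(G) be the set of representatives, and suppose w ∈ R maximizes the total size of the groups it represents, i.e., for every x ∈ R, Σ_{g∈G : r(g)=x} |g| ≤ Σ_{g∈G : r(g)=w} |g|. Then for every alternative o ∈ A, Σ_{i∈N} d(i,o) ≤ (2|R| − 1) · Σ_{i∈N} d(i,w); in particular, Σ_{i∈N} d(i,o) ≤ (2·min(|A|,|G|) − 1) · Σ_{i∈N} d(i,w). -/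

import Mathlib

/-- Distortion upper bound `2·|R| − 1 ≤ 2·min(m,k) − 1` for the
Max-Weight-of-Optimal mechanism in obnoxious distributed metric voting. -/
theorem maxWeightOfOptimal_distortion
    {M ι κ : Type*} [PseudoMetricSpace M] [DecidableEq M] [DecidableEq ι] [DecidableEq κ]
    (N : Finset ι) (hN : N.Nonempty) (loc : ι → M)
    (G : Finset κ) (hG : G.Nonempty) (grp : κ → Finset ι)
    (hgne : ∀ g ∈ G, (grp g).Nonempty)
    (hdisj : ∀ g ∈ G, ∀ g' ∈ G, g ≠ g' → Disjoint (grp g) (grp g'))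
    (hcover : N = G.biUnion grp)
    (A : Finset M) (hA : A.Nonempty)
    (r : κ → M) (hrA : ∀ g ∈ G, r g ∈ A)
    (hropt : ∀ g ∈ G, ∀ x ∈ A,
      ∑ i ∈ grp g, dist (loc i) x ≤ ∑ i ∈ grp g, dist (loc i) (r g))
    (R : Finset M) (hR : R = G.image r)
    (w : M) (hw : w ∈ R)
    (hwmax : ∀ x ∈ R,
      ∑ g ∈ G.filter (fun g => r g = x), (grp g).card ≤
        ∑ g ∈ G.filter (fun g => r g = w), (grp g).card)
    (o : M) (ho : o ∈ A) :
    ∑ i ∈ N, dist (loc i) o ≤ (2 * (R.card : ℝ) - 1) * ∑ i ∈ N, dist (loc i) w ∧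
    ∑ i ∈ N, dist (loc i) o ≤
      (2 * (min A.card G.card : ℝ) - 1) * ∑ i ∈ N, dist (loc i) w := by
  set S : ℝ := ∑ i ∈ N, dist (loc i) w with hSdef
  have hS0 : (0:ℝ) ≤ S := Finset.sum_nonneg fun i _ => dist_nonneg
  have hsplit : ∀ f : ι → ℝ, ∑ i ∈ N, f i = ∑ g ∈ G, ∑ i ∈ grp g, f i := by
    intro f
    rw [hcover]
    exact Finset.sum_biUnion fun g hg g' hg' h => hdisj g hg g' hg' h
  have hRA : R ⊆ A := by
    rw [hR]; intro x hx
    obtain ⟨g, hg, rfl⟩ := Finset.mem_image.mp hx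
    exact hrA g hg
  obtain ⟨g0, hg0, hg0w⟩ : ∃ g ∈ G, r g = w := Finset.mem_image.mp (hR ▸ hw)
  set Gw : Finset κ := G.filter (fun g => r g = w) with hGwdef
  set nw : ℕ := ∑ g ∈ Gw, (grp g).card with hnwdef
  -- key bound : nw * dist w x ≤ 2 * S for any x ∈ R
  have hkey : ∀ x ∈ R, (nw : ℝ) * dist w x ≤ 2 * S := by
    intro x hx
    have h1 : ∀ g ∈ Gw, ((grp g).card : ℝ) * dist w x
        ≤ 2 * ∑ i ∈ grp g, dist (loc i) w := by
      intro g hg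
      obtain ⟨hgG, hgw⟩ := Finset.mem_filter.mp hg
      calc ((grp g).card : ℝ) * dist w x
          = ∑ _i ∈ grp g, dist w x := by
            rw [Finset.sum_const, nsmul_eq_mul]
        _ ≤ ∑ i ∈ grp g, (dist (loc i) w + dist (loc i) x) := by
            refine Finset.sum_le_sum fun i _ => ?_
            calc dist w x ≤ dist w (loc i) + dist (loc i) x := dist_triangle _ _ _
              _ = dist (loc i) w + dist (loc i) x := by rw [dist_comm w]
        _ = (∑ i ∈ grp g, dist (loc i) w) + ∑ i ∈ grp g, dist (loc i) x := by
            rw [Finset.sum_add_distrib]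
        _ ≤ (∑ i ∈ grp g, dist (loc i) w) + ∑ i ∈ grp g, dist (loc i) (r g) :=
            add_le_add le_rfl (hropt g hgG x (hRA hx))
        _ = 2 * ∑ i ∈ grp g, dist (loc i) w := by rw [hgw]; ring
    calc (nw : ℝ) * dist w x
        = ∑ g ∈ Gw, ((grp g).card : ℝ) * dist w x := by
          rw [hnwdef]; push_cast; rw [Finset.sum_mul]
      _ ≤ ∑ g ∈ Gw, 2 * ∑ i ∈ grp g, dist (loc i) w := Finset.sum_le_sum h1
      _ = 2 * ∑ g ∈ Gw, ∑ i ∈ grp g, dist (loc i) w := by rw [Finset.mul_sum]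
      _ ≤ 2 * ∑ g ∈ G, ∑ i ∈ grp g, dist (loc i) w := by
          have := Finset.sum_le_sum_of_subset_of_nonneg
            (f := fun g => ∑ i ∈ grp g, dist (loc i) w)
            (Finset.filter_subset (fun g => r g = w) G)
            (fun g _ _ => Finset.sum_nonneg fun i _ => dist_nonneg)
          linarith
      _ = 2 * S := by rw [hSdef, hsplit]
  -- main chain
  have hmain : ∑ i ∈ N, dist (loc i) o ≤ (2 * (R.card : ℝ) - 1) * S := by
    have step1 : ∑ i ∈ N, dist (loc i) o
        ≤ S + ∑ g ∈ G, ((grp g).card : ℝ) * dist w (r g) := by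
      calc ∑ i ∈ N, dist (loc i) o = ∑ g ∈ G, ∑ i ∈ grp g, dist (loc i) o :=
            hsplit _
        _ ≤ ∑ g ∈ G, ∑ i ∈ grp g, dist (loc i) (r g) :=
            Finset.sum_le_sum fun g hg => hropt g hg o ho
        _ ≤ ∑ g ∈ G, ∑ i ∈ grp g, (dist (loc i) w + dist w (r g)) :=
            by
              refine Finset.sum_le_sum fun g _ => Finset.sum_le_sum fun i _ => ?_
              exact dist_triangle (loc i) w (r g)
        _ = ∑ g ∈ G, ((∑ i ∈ grp g, dist (loc i) w)
              + ((grp g).card : ℝ) * dist w (r g)) := by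
            refine Finset.sum_congr rfl fun g _ => ?_
            rw [Finset.sum_add_distrib, Finset.sum_const, nsmul_eq_mul]
        _ = S + ∑ g ∈ G, ((grp g).card : ℝ) * dist w (r g) := by
            rw [Finset.sum_add_distrib, hSdef, hsplit]
    have step2 : ∑ g ∈ G, ((grp g).card : ℝ) * dist w (r g)
        = ∑ x ∈ R, ((∑ g ∈ G.filter (fun g => r g = x), (grp g).card : ℕ) : ℝ)
            * dist w x := by
      rw [← Finset.sum_fiberwise_of_maps_to (g := r) (t := R)
        (fun g hg => hR ▸ Finset.mem_image_of_mem r hg)]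
      refine Finset.sum_congr rfl fun x _ => ?_
      push_cast
      rw [Finset.sum_mul]
      refine Finset.sum_congr rfl fun g hg => ?_
      rw [(Finset.mem_filter.mp hg).2]
    have step3 : ∑ x ∈ R, ((∑ g ∈ G.filter (fun g => r g = x), (grp g).card : ℕ) : ℝ)
          * dist w x ≤ ((R.card : ℝ) - 1) * (2 * S) := by
      have hsum : ∑ x ∈ R, ((∑ g ∈ G.filter (fun g => r g = x), (grp g).card : ℕ) : ℝ)
            * dist w x
          = ∑ x ∈ R.erase w, ((∑ g ∈ G.filter (fun g => r g = x), (grp g).card : ℕ) : ℝ)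
            * dist w x := by
        rw [← Finset.add_sum_erase R _ hw, dist_self, mul_zero, zero_add]
      rw [hsum]
      have hterm : ∀ x ∈ R.erase w,
          ((∑ g ∈ G.filter (fun g => r g = x), (grp g).card : ℕ) : ℝ) * dist w x
          ≤ 2 * S := by
        intro x hx
        have hxR := Finset.mem_of_mem_erase hx
        calc ((∑ g ∈ G.filter (fun g => r g = x), (grp g).card : ℕ) : ℝ) * dist w x
            ≤ (nw : ℝ) * dist w x := by
              refine mul_le_mul_of_nonneg_right ?_ dist_nonneg
              exact_mod_cast hwmax x hxR
          _ ≤ 2 * S := hkey x hxR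
      calc ∑ x ∈ R.erase w, ((∑ g ∈ G.filter (fun g => r g = x), (grp g).card : ℕ) : ℝ)
            * dist w x
          ≤ (R.erase w).card • (2 * S) := Finset.sum_le_card_nsmul _ _ _ hterm
        _ = ((R.erase w).card : ℝ) * (2 * S) := by rw [nsmul_eq_mul]
        _ = ((R.card : ℝ) - 1) * (2 * S) := by
            rw [Finset.card_erase_of_mem hw]
            congr 1
            have : 1 ≤ R.card := Finset.card_pos.mpr ⟨w, hw⟩
            push_cast [Nat.cast_sub this]
            ring
      
    have := step1
    rw [step2] at this
    nlinarith [step3]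
  refine ⟨hmain, ?_⟩
  have hle : (R.card : ℝ) ≤ ((min A.card G.card : ℕ) : ℝ) := by
    have h1 : R.card ≤ A.card := Finset.card_le_card hRA
    have h2 : R.card ≤ G.card := by rw [hR]; exact Finset.card_image_le
    exact_mod_cast le_min h1 h2
  rw [Nat.cast_min] at hle
  nlinarith [hmain, hS0, hle]
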